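/- Let G be the time-invariant dynamic Bayesian network DAG of the environment and suppose the joint distribution of the variables satisfies the global Markov condition and faithfulness with respect to G. Then for every index i ∈ {1,…,d}, the entry c^{a→g}_i = 1 if and only if g_{i,t} is NOT conditionally independent of the action a_{t-1} given the previous latent states g_{t-1}. -/

import Mathlib

open Relation

/-- Nodes of the time-invariant dynamic Bayesian network: latent state
components `g_{i,t}`, actions `a_t`, and rewards `r_t`. -/
inductive DBNNode (d : ℕ) : Type where
  | latent (i : Fin d) (t : ℕ)
  | action (t : ℕ)
  | reward (t : ℕ)
deriving DecidableEq

/-- The fixed binary structural masks of the DBN.  `cgg i j = true` encodes the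
edge `g_{j,t-1} → g_{i,t}`, `cag i` the edge `a_{t-1} → g_{i,t}`, `cgr i` the
edge `g_{i,t-1} → r_t`, and `car` the edge `a_{t-1} → r_t`. -/
structure DBNMasks (d : ℕ) where
  cgg : Fin d → Fin d → Bool
  cag : Fin d → Bool
  cgr : Fin d → Bool
  car : Bool

/-- The directed edges of the time-invariant DBN graph `G`. -/
def DBNEdge {d : ℕ} (c : DBNMasks d) : DBNNode d → DBNNode d → Prop
  | .latent j t, .latent i t' => t' = t + 1 ∧ c.cgg i j = true
  | .action t, .latent i t' => t' = t + 1 ∧ c.cag i = true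
  | .latent i t, .reward t' => t' = t + 1 ∧ c.cgr i = true
  | .action t, .reward t' => t' = t + 1 ∧ c.car = true
  | _, _ => False

/-- Undirected adjacency induced by a directed edge relation. -/
def Adj {V : Type*} (E : V → V → Prop) (x y : V) : Prop := E x y ∨ E y x

/-- `p` is a (simple, undirected) path in the graph with edge relation `E`:
consecutive nodes are adjacent and no node repeats. -/
def IsPathList {V : Type*} (E : V → V → Prop) (p : List V) : Prop :=
  p.Chain' (Adj E) ∧ p.Nodup

/-- A path `p` is blocked by the conditioning set `Z`: it contains a
chain `u → m → v` (in either direction) or a fork `u ← m → v` with middle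
node `m ∈ Z`, or a collider `u → m ← v` with `m ∉ Z` and no descendant of
`m` in `Z`. -/
def BlockedBy {V : Type*} (E : V → V → Prop) (Z : Set V) (p : List V) : Prop :=
  ∃ u m v : V, [u, m, v] <:+: p ∧
    ((((E u m ∧ E m v) ∨ (E v m ∧ E m u) ∨ (E m u ∧ E m v)) ∧ m ∈ Z) ∨
      ((E u m ∧ E v m) ∧ m ∉ Z ∧ ∀ w : V, Relation.TransGen E m w → w ∉ Z))

/-- `Z` d-separates `X` from `Y` in the graph with edge relation `E`: every
path between a node of `X` and a node of `Y` is blocked by `Z`. -/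
def DSep {V : Type*} (E : V → V → Prop) (X Y Z : Set V) : Prop :=
  ∀ x ∈ X, ∀ y ∈ Y, ∀ p : List V,
    IsPathList E p → p.head? = some x → p.getLast? = some y → BlockedBy E Z p

/-- The joint distribution (represented abstractly by its ternary conditional
independence relation `CI X Y Z`, "X ⫫ Y given Z") satisfies the global Markov
condition w.r.t. the graph: d-separation implies conditional independence. -/
def GlobalMarkov {V : Type*} (E : V → V → Prop)
    (CI : Set V → Set V → Set V → Prop) : Prop :=
  ∀ X Y Z : Set V, Disjoint X Y → Disjoint X Z → Disjoint Y Z →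
    DSep E X Y Z → CI X Y Z

/-- The joint distribution is faithful to the graph: every conditional
independence corresponds to a d-separation. -/
def FaithfulTo {V : Type*} (E : V → V → Prop)
    (CI : Set V → Set V → Set V → Prop) : Prop :=
  ∀ X Y Z : Set V, Disjoint X Y → Disjoint X Z → Disjoint Y Z →
    CI X Y Z → DSep E X Y Z

/-- `g_{i,t} ∈ g_t^min` iff `c_i^{g→r} = 1` or `g_{i,t}` has a directed path in
`G` to a future reward `r_{t+k}` (some `k > 0`) passing through other latent
state components. -/
def InMinSet {d : ℕ} (c : DBNMasks d) (i : Fin d) (t : ℕ) : Prop :=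
  c.cgr i = true ∨
    ∃ k : ℕ, 0 < k ∧ ∃ (j : Fin d) (s : ℕ),
      Relation.TransGen (DBNEdge c) (DBNNode.latent i t) (DBNNode.latent j s) ∧
      Relation.TransGen (DBNEdge c) (DBNNode.latent j s) (DBNNode.reward (t + k))

/-- The minimal latent state set `g_t^min`, as a set of nodes of `G`. -/
def MinSet {d : ℕ} (c : DBNMasks d) (t : ℕ) : Set (DBNNode d) :=
  {n | ∃ i : Fin d, n = DBNNode.latent i t ∧ InMinSet c i t}


section Aux

variable {d : ℕ}

/-- The time index of a node. -/
def DBNNode.time : DBNNode d → ℕ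
  | .latent _ s => s
  | .action s => s
  | .reward s => s

@[simp] lemma time_latent (i : Fin d) (s : ℕ) : (DBNNode.latent i s).time = s := rfl
@[simp] lemma time_action (s : ℕ) : (DBNNode.action (d := d) s).time = s := rfl
@[simp] lemma time_reward (s : ℕ) : (DBNNode.reward (d := d) s).time = s := rfl

lemma edge_time {c : DBNMasks d} {x y : DBNNode d} (h : DBNEdge c x y) :
    y.time = x.time + 1 := by
  cases x <;> cases y <;> simp [DBNEdge] at h <;> simp [h.1]

lemma transGen_time_lt {c : DBNMasks d} {x y : DBNNode d}
    (h : Relation.TransGen (DBNEdge c) x y) : x.time < y.time := by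
  induction h with
  | single h => have := edge_time h; omega
  | tail _ h ih => have := edge_time h; omega

lemma no_edge_into_action {c : DBNMasks d} {x : DBNNode d} {s : ℕ} :
    ¬ DBNEdge c x (DBNNode.action s) := by
  cases x <;> simp [DBNEdge]

lemma blocked_of_infix {V : Type*} {E : V → V → Prop} {Z : Set V} {q p : List V}
    (h : q <:+: p) (hb : BlockedBy E Z q) : BlockedBy E Z p := by
  obtain ⟨u, m, v, hinf, hcnd⟩ := hb
  exact ⟨u, m, v, hinf.trans h, hcnd⟩

lemma blocked_reverse {V : Type*} {E : V → V → Prop} {Z : Set V} {p : List V}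
    (hb : BlockedBy E Z p.reverse) : BlockedBy E Z p := by
  obtain ⟨u, m, v, hinf, hcnd⟩ := hb
  have h2 : [v, m, u] <:+: p := by
    have := hinf.reverse
    simpa using this
  refine ⟨v, m, u, h2, ?_⟩
  rcases hcnd with ⟨hchain, hm⟩ | ⟨⟨h1a, h2a⟩, hm⟩
  · exact Or.inl ⟨by tauto, hm⟩
  · exact Or.inr ⟨⟨h2a, h1a⟩, hm⟩

/-- Key blocking lemma: walking backwards (from the action) along a path,
times strictly increase, so either we hit a collider (blocked, since all
nodes are in the future of `t`) or we reach the head with a contradiction. -/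
lemma key_blocked {c : DBNMasks d} {i : Fin d} {t : ℕ} (hc : c.cag i = false) :
    ∀ (rest : List (DBNNode d)) (a b : DBNNode d),
      (a = DBNNode.action t ∨ t + 1 ≤ a.time) →
      DBNEdge c a b →
      List.Chain' (Adj (DBNEdge c)) (a :: b :: rest) →
      (a :: b :: rest).getLast (by simp) = DBNNode.latent i (t + 1) →
      BlockedBy (DBNEdge c) {n : DBNNode d | ∃ j : Fin d, n = DBNNode.latent j t}
        (a :: b :: rest) := by
  intro rest
  induction rest with
  | nil =>
    intro a b hinv hE hch hlast
    simp at hlast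
    subst hlast
    have ht := edge_time hE
    simp at ht
    rcases hinv with rfl | hge
    · simp [DBNEdge, hc] at hE
    · omega
  | cons w rest ih =>
    intro a b hinv hE hch hlast
    have hbtime : t + 1 ≤ b.time := by
      have h := edge_time hE
      rcases hinv with rfl | hge
      · simp at h; omega
      · omega
    have hbZ : b ∉ {n : DBNNode d | ∃ j : Fin d, n = DBNNode.latent j t} := by
      rintro ⟨j, rfl⟩
      simp at hbtime
    obtain ⟨hadj1, hch2⟩ := List.isChain_cons_cons.mp hch
    obtain ⟨hadj2, hch3⟩ := List.isChain_cons_cons.mp hch2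
    rcases hadj2 with hbw | hwb
    · -- continue: E b w
      have hblk := ih b w (Or.inr hbtime) hbw hch2 (by
        rw [← hlast]; simp [List.getLast_cons])
      exact blocked_of_infix ((List.suffix_cons a _).isInfix) hblk
    · -- collider at b
      refine ⟨a, b, w, ⟨[], rest, by simp⟩, Or.inr ⟨⟨hE, hwb⟩, hbZ, ?_⟩⟩
      intro n hn
      rintro ⟨j, rfl⟩
      have := transGen_time_lt hn
      simp at this
      omega

end Aux

/-- Under the global Markov condition and faithfulness, `c^{a→g}_i = 1` iff
`g_{i,t}` is conditionally dependent on the action `a_{t-1}` given the previous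
latent states `g_{t-1}`. -/
theorem cag_identification (d : ℕ) (c : DBNMasks d)
    (CI : Set (DBNNode d) → Set (DBNNode d) → Set (DBNNode d) → Prop)
    (hMarkov : GlobalMarkov (DBNEdge c) CI)
    (hFaithful : FaithfulTo (DBNEdge c) CI) (i : Fin d) (t : ℕ) :
    c.cag i = true ↔
      ¬ CI {DBNNode.latent i (t + 1)} {DBNNode.action t}
        {n : DBNNode d | ∃ j : Fin d, n = DBNNode.latent j t} := by
  set Z : Set (DBNNode d) := {n : DBNNode d | ∃ j : Fin d, n = DBNNode.latent j t} with hZ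
  have hd1 : Disjoint ({DBNNode.latent i (t + 1)} : Set (DBNNode d)) {DBNNode.action t} := by
    simp [Set.disjoint_singleton]
  have hd2 : Disjoint ({DBNNode.latent i (t + 1)} : Set (DBNNode d)) Z := by
    simp only [Set.disjoint_singleton_left, hZ, Set.mem_setOf_eq]
    rintro ⟨j, hj⟩
    simp at hj
  have hd3 : Disjoint ({DBNNode.action t} : Set (DBNNode d)) Z := by
    simp only [Set.disjoint_singleton_left, hZ, Set.mem_setOf_eq]
    rintro ⟨j, hj⟩
    simp at hj
  constructor
  · intro hcag hCI
    have hdsep := hFaithful _ _ _ hd1 hd2 hd3 hCI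
    have hblk := hdsep (DBNNode.latent i (t + 1)) rfl (DBNNode.action t) rfl
      [DBNNode.latent i (t + 1), DBNNode.action t]
      ⟨by simp [List.Chain', Adj, DBNEdge, hcag], by simp⟩ rfl rfl
    obtain ⟨u, m, v, hinf, -⟩ := hblk
    have := hinf.length_le
    simp at this
  · intro hnCI
    by_contra hcag
    have hc : c.cag i = false := by simpa using hcag
    apply hnCI
    apply hMarkov _ _ _ hd1 hd2 hd3
    intro x hx y hy p hp hhead hlast
    simp only [Set.mem_singleton_iff] at hx hy
    subst hx; subst hy
    apply blocked_reverse
    -- study q = p.reverse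
    have hnil : p ≠ [] := by rintro rfl; simp at hhead
    have hqhead : p.reverse.head? = some (DBNNode.action t) := by
      rw [List.head?_reverse]; exact hlast
    have hqlast : p.reverse.getLast? = some (DBNNode.latent i (t + 1)) := by
      rw [List.getLast?_reverse]; exact hhead
    have hqch : p.reverse.Chain' (Adj (DBNEdge c)) := by
      show p.reverse.IsChain _
      rw [List.isChain_reverse]
      exact hp.1.imp (fun a b h => h.symm.imp id id)
    obtain ⟨q0, qs, hq⟩ : ∃ q0 qs, p.reverse = q0 :: qs := by
      cases hpr : p.reverse with
      | nil => rw [hpr] at hqhead; simp at hqhead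
      | cons q0 qs => exact ⟨q0, qs, rfl⟩
    rw [hq] at hqhead hqlast hqch ⊢
    simp at hqhead
    subst hqhead
    cases qs with
    | nil =>
      simp at hqlast
    | cons b rest =>
      obtain ⟨hadj, -⟩ := List.isChain_cons_cons.mp hqch
      have hE : DBNEdge c (DBNNode.action t) b := by
        rcases hadj with h | h
        · exact h
        · exact absurd h no_edge_into_action
      apply key_blocked hc rest (DBNNode.action t) b (Or.inl rfl) hE hqch
      have := hqlast
      rw [List.getLast?_eq_getLast (by simp)] at this
      simpa using this
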